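/- (Direct reduction of the general r-th flow.) Let r ≥ 1 be a natural number, c_0 ∈ ℝ, I ⊆ ℝ an open interval, and σ : I → ℝ twice differentiable with σ'(t) > 0 and σ''(t) = -(r+1) c_0 σ'(t)^2 for all t ∈ I. Let ν : ℤ → ℝ be arbitrary, set η(n,t) = ν(n) + σ(t), and let H, G : ℝ → ℝ be differentiable. Let 𝒫_j, 𝒬_j : ℤ × I → ℝ be the sequences obtained by applying the Toda-hierarchy recursion to the pair (Ĥ, Ĝ), where Ĥ(n,t) = H(η(n,t)) and Ĝ(n,t) = G(η(n,t)). Suppose that for all n ∈ ℤ and t ∈ I: -c_0 H(η(n,t)) + H'(η(n,t)) = H(η(n,t))(𝒫_{r+1}(n+1,t) - 𝒫_{r+1}(n,t)) and -c_0 G(η(n,t)) + G'(η(n,t)) = 𝒬_{r+1}(n,t) - 𝒬_{r+1}(n-1,t). Then u(n,t) := σ'(t)^{1/(r+1)} · H(η(n,t)) and v(n,t) := σ'(t)^{1/(r+1)} · G(η(n,t)) are differentiable in t and satisfy the r-th flow TL_r of the Toda hierarchy for all n ∈ ℤ and t ∈ I. -/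

import Mathlib

mutual
/-- `p`-sequence of the Toda-hierarchy recursion generated from `(u, v)`:
`p₀ = 1`, `p_{r+1}(n,t) = (1/2)(q_r(n,t) + q_r(n-1,t)) + v(n,t) p_r(n,t)`. -/
noncomputable def todaP (u v : ℤ × ℝ → ℝ) : ℕ → ℤ × ℝ → ℝ
  | 0, _ => 1
  | (r+1), (n, t) =>
      (1/2) * (todaQ u v r (n, t) + todaQ u v r (n-1, t)) + v (n, t) * todaP u v r (n, t)
termination_by r _ => r

/-- `q`-sequence of the Toda-hierarchy recursion generated from `(u, v)`:
`q₀ = 0`,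
`q_{r+1}(n,t) = 2 u(n,t)² Σ_{l=0}^{r} p_{r-l}(n,t) p_l(n+1,t) - (1/2) Σ_{l=0}^{r} q_{r-l}(n,t) q_l(n,t)`. -/
noncomputable def todaQ (u v : ℤ × ℝ → ℝ) : ℕ → ℤ × ℝ → ℝ
  | 0, _ => 0
  | (r+1), (n, t) =>
      2 * (u (n, t))^2 * ∑ l ∈ (Finset.range (r+1)).attach,
          todaP u v (r - l.1) (n, t) * todaP u v l.1 (n+1, t)
      - (1/2) * ∑ l ∈ (Finset.range (r+1)).attach,
          todaQ u v (r - l.1) (n, t) * todaQ u v l.1 (n, t)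
termination_by r _ => r
decreasing_by
  all_goals (try (have hl := l.2; simp only [Finset.mem_range] at hl)); omega
end

/-- The `r`-th flow `TL_r` of the Toda hierarchy, at lattice site `n` and time `t`:
`∂ₜ u(n,t) = u(n,t)(p_{r+1}(n+1,t) - p_{r+1}(n,t))`,
`∂ₜ v(n,t) = q_{r+1}(n,t) - q_{r+1}(n-1,t)`. -/
def TodaFlow (u v : ℤ × ℝ → ℝ) (r : ℕ) (n : ℤ) (t : ℝ) : Prop :=
  HasDerivAt (fun s => u (n, s))
    (u (n, t) * (todaP u v (r+1) (n+1, t) - todaP u v (r+1) (n, t))) t ∧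
  HasDerivAt (fun s => v (n, s))
    (todaQ u v (r+1) (n, t) - todaQ u v (r+1) (n-1, t)) t

lemma toda_scaling (U V u v : ℤ × ℝ → ℝ) (lam : ℝ → ℝ)
    (hu : ∀ (n : ℤ) (t : ℝ), u (n, t) = lam t * U (n, t))
    (hv : ∀ (n : ℤ) (t : ℝ), v (n, t) = lam t * V (n, t)) :
    ∀ j : ℕ,
      (∀ (n : ℤ) (t : ℝ), todaP u v j (n, t) = (lam t)^j * todaP U V j (n, t)) ∧
      (∀ (n : ℤ) (t : ℝ), todaQ u v j (n, t) = (lam t)^(j+1) * todaQ U V j (n, t)) := by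
  intro j
  induction j using Nat.strong_induction_on with
  | _ j ih =>
    match j with
    | 0 => constructor <;> intro n t <;> simp [todaP, todaQ]
    | (r+1) =>
      constructor
      · intro n t
        rw [todaP, todaP, (ih r (by omega)).2 n t, (ih r (by omega)).2 (n-1) t,
          (ih r (by omega)).1 n t, hv]
        ring
      · intro n t
        rw [todaQ, todaQ, hu]
        have h1 : ∀ m : ℤ, ∑ l ∈ (Finset.range (r+1)).attach,
            todaP u v (r - l.1) (m, t) * todaP u v l.1 (m+1, t)
            = (lam t)^r * ∑ l ∈ (Finset.range (r+1)).attach,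
              todaP U V (r - l.1) (m, t) * todaP U V l.1 (m+1, t) := by
          intro m
          rw [Finset.mul_sum]
          refine Finset.sum_congr rfl fun l _ => ?_
          have hl : l.1 < r + 1 := Finset.mem_range.mp l.2
          rw [(ih (r - l.1) (by omega)).1, (ih l.1 (by omega)).1,
            mul_mul_mul_comm, ← pow_add, Nat.sub_add_cancel (by omega)]
        have h2 : ∑ l ∈ (Finset.range (r+1)).attach,
            todaQ u v (r - l.1) (n, t) * todaQ u v l.1 (n, t)
            = (lam t)^(r+2) * ∑ l ∈ (Finset.range (r+1)).attach,
              todaQ U V (r - l.1) (n, t) * todaQ U V l.1 (n, t) := by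
          rw [Finset.mul_sum]
          refine Finset.sum_congr rfl fun l _ => ?_
          have hl : l.1 < r + 1 := Finset.mem_range.mp l.2
          rw [(ih (r - l.1) (by omega)).2, (ih l.1 (by omega)).2,
            mul_mul_mul_comm, ← pow_add]
          congr 2
          omega
        rw [h1, h2]
        ring

/-- Direct reduction of the general `r`-th flow of the Toda hierarchy:
if `σ` solves `σ'' = -(r+1)c₀(σ')²` with `σ' > 0` on an open interval,
`η(n,t) = ν(n) + σ(t)`, and `H, G` solve the reduced `r`-th flow delay-differential
system built from the Toda-hierarchy recursion applied to `Ĥ(n,t) = H(η(n,t))`,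
`Ĝ(n,t) = G(η(n,t))`, then `u(n,t) = σ'(t)^(1/(r+1)) H(η(n,t))`,
`v(n,t) = σ'(t)^(1/(r+1)) G(η(n,t))` solve the flow `TL_r` of the Toda hierarchy. -/
theorem direct_reduction_general_flow
    (r : ℕ) (hr : 1 ≤ r)
    (c₀ a b : ℝ) (σ σ' σ'' : ℝ → ℝ)
    (hσ : ∀ t ∈ Set.Ioo a b, HasDerivAt σ (σ' t) t)
    (hσ' : ∀ t ∈ Set.Ioo a b, HasDerivAt σ' (σ'' t) t)
    (hσpos : ∀ t ∈ Set.Ioo a b, 0 < σ' t)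
    (hode : ∀ t ∈ Set.Ioo a b, σ'' t = -((r : ℝ) + 1) * c₀ * (σ' t)^2)
    (ν : ℤ → ℝ) (η : ℤ → ℝ → ℝ) (hη : ∀ (n : ℤ) (t : ℝ), η n t = ν n + σ t)
    (H G H' G' : ℝ → ℝ)
    (hH : ∀ x : ℝ, HasDerivAt H (H' x) x)
    (hG : ∀ x : ℝ, HasDerivAt G (G' x) x)
    (Hhat Ghat : ℤ × ℝ → ℝ)
    (hHhat : ∀ (n : ℤ) (t : ℝ), Hhat (n, t) = H (η n t))
    (hGhat : ∀ (n : ℤ) (t : ℝ), Ghat (n, t) = G (η n t))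
    (hred₁ : ∀ (n : ℤ), ∀ t ∈ Set.Ioo a b,
      -c₀ * H (η n t) + H' (η n t) =
        H (η n t) * (todaP Hhat Ghat (r+1) (n+1, t) - todaP Hhat Ghat (r+1) (n, t)))
    (hred₂ : ∀ (n : ℤ), ∀ t ∈ Set.Ioo a b,
      -c₀ * G (η n t) + G' (η n t) =
        todaQ Hhat Ghat (r+1) (n, t) - todaQ Hhat Ghat (r+1) (n-1, t))
    (u v : ℤ × ℝ → ℝ)
    (hu : ∀ (n : ℤ) (t : ℝ), u (n, t) = (σ' t) ^ (((r : ℝ) + 1)⁻¹) * H (η n t))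
    (hv : ∀ (n : ℤ) (t : ℝ), v (n, t) = (σ' t) ^ (((r : ℝ) + 1)⁻¹) * G (η n t)) :
    ∀ (n : ℤ), ∀ t ∈ Set.Ioo a b, TodaFlow u v r n t := by
  intro n t ht
  have hspos := hσpos t ht
  have hR : ((r : ℝ) + 1) ≠ 0 := by positivity
  have hc : (((r : ℝ) + 1)⁻¹) * ((r : ℝ) + 1) = 1 := inv_mul_cancel₀ hR
  set c : ℝ := ((r : ℝ) + 1)⁻¹ with hc_def
  have hscale := toda_scaling Hhat Ghat u v (fun s => (σ' s) ^ c)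
    (fun m τ => by rw [hu, hHhat]) (fun m τ => by rw [hv, hGhat])
  have lamkey : ((σ' t) ^ c) ^ (r + 1 : ℕ) = σ' t := by
    rw [← Real.rpow_natCast ((σ' t) ^ c) (r + 1), ← Real.rpow_mul hspos.le]
    push_cast
    rw [hc, Real.rpow_one]
  have hpow : (σ' t) ^ (c - 1) * σ' t = (σ' t) ^ c := by
    rw [Real.rpow_sub hspos, Real.rpow_one, div_mul_cancel₀ _ hspos.ne']
  have hlam : HasDerivAt (fun s => (σ' s) ^ c)
      (σ'' t * c * (σ' t) ^ (c - 1)) t :=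
    (hσ' t ht).rpow_const (Or.inl hspos.ne')
  constructor
  · -- u equation
    have hfun : (fun s => u (n, s)) = fun s => (σ' s) ^ c * H (ν n + σ s) := by
      funext s; rw [hu, hη]
    have h2 : HasDerivAt (fun s => H (ν n + σ s)) (H' (ν n + σ t) * σ' t) t :=
      (hH (ν n + σ t)).comp t ((hσ t ht).const_add (ν n))
    have hD : HasDerivAt (fun s => (σ' s) ^ c * H (ν n + σ s)) _ t := hlam.mul h2
    rw [hfun]
    convert hD using 1
    rw [hu n t, (hscale (r+1)).1 (n+1) t, (hscale (r+1)).1 n t]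
    rw [lamkey, hode t ht, hη]
    have hE := hred₁ n t ht
    rw [hη] at hE
    linear_combination (-((σ' t) ^ c * σ' t)) * hE
      + (c₀ * (σ' t)^2 * (σ' t) ^ (c-1) * H (ν n + σ t)) * hc
      + (c₀ * σ' t * H (ν n + σ t)) * hpow
  · -- v equation
    have hfun : (fun s => v (n, s)) = fun s => (σ' s) ^ c * G (ν n + σ s) := by
      funext s; rw [hv, hη]
    have h2 : HasDerivAt (fun s => G (ν n + σ s)) (G' (ν n + σ t) * σ' t) t :=
      (hG (ν n + σ t)).comp t ((hσ t ht).const_add (ν n))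
    have hD : HasDerivAt (fun s => (σ' s) ^ c * G (ν n + σ s)) _ t := hlam.mul h2
    rw [hfun]
    convert hD using 1
    rw [(hscale (r+1)).2 n t, (hscale (r+1)).2 (n-1) t]
    have hq : ((σ' t) ^ c) ^ (r + 1 + 1 : ℕ) = σ' t * (σ' t) ^ c := by
      rw [pow_succ, lamkey, mul_comm]
    rw [hq, hode t ht]
    have hE := hred₂ n t ht
    rw [hη] at hE
    linear_combination (-(σ' t * (σ' t) ^ c)) * hE
      + (c₀ * (σ' t)^2 * (σ' t) ^ (c-1) * G (ν n + σ t)) * hc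
      + (c₀ * σ' t * G (ν n + σ t)) * hpow
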